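/- Let G be a directed multigraph and suppose there exists a (R, φ, ψ)-witness W (with respect to some weight vector γ) of the pair (G, 0), where 0 is the all-zero vector. Then G is a ψ²φ-expander: for every cut (S, S̄) with vol_G(S) ≤ vol_G(S̄), both |E_G(S,S̄)| ≥ ψ²φ·vol_G(S) and |E_G(S̄,S)| ≥ ψ²φ·vol_G(S). -/

import Mathlib

open Finset

variable {V : Type*} [Fintype V] [DecidableEq V]

/-- Degree of `v` in a multigraph given by an edge type with tail and head maps
(a self-loop counts twice). -/
def degF {E : Type*} [Fintype E] (t h : E → V) (v : V) : ℕ :=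
  (univ.filter (fun e => t e = v)).card + (univ.filter (fun e => h e = v)).card

/-- Volume of a vertex set. -/
def volF {E : Type*} [Fintype E] (t h : E → V) (S : Finset V) : ℕ := ∑ v ∈ S, degF t h v

/-- Number of edges with tail in `S` and head not in `S`. -/
def cutF {E : Type*} [Fintype E] (t h : E → V) (S : Finset V) : ℕ :=
  (univ.filter (fun e => t e ∈ S ∧ h e ∉ S)).card

/-- `IsWalk t h u v l` : the list of edges `l` forms a walk from `u` to `v`. -/
def IsWalk {E : Type*} (t h : E → V) : V → V → List E → Prop
  | u, v, [] => u = v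
  | u, v, e :: es => t e = u ∧ IsWalk t h (h e) v es

/-- If `(G, 0)` admits an `(R, φ, ψ)`-witness `W` (with respect to an arbitrary weight vector
`γ`): `W` embeds into `G` with congestion `1/(ψφ)` in both directions, `deg_G ≤ deg_W ≤ deg_G/ψ`,
and all `γ`-oriented cuts of `W` are `ψ`-expanding in both directions — then `G` is a
`ψ²φ`-expander: every cut `(S, S̄)` with `vol_G(S) ≤ vol_G(S̄)` has at least `ψ²φ · vol_G(S)`
edges crossing in each direction. -/

lemma walk_cross {V : Type*} [DecidableEq V] {E : Type*} (t h : E → V) (S : Finset V) :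
    ∀ (l : List E) (u v : V), IsWalk t h u v l → u ∈ S → v ∉ S →
      ∃ e ∈ l, t e ∈ S ∧ h e ∉ S := by
  intro l
  induction l with
  | nil => intro u v hw hu hv; exact absurd (hw ▸ hu) hv
  | cons e es ih =>
      intro u v hw hu hv
      obtain ⟨hte, hw'⟩ := hw
      by_cases hhe : h e ∈ S
      · obtain ⟨e', he', hc⟩ := ih (h e) v hw' hhe hv
        exact ⟨e', List.mem_cons_of_mem _ he', hc⟩
      · exact ⟨e, List.mem_cons_self, hte ▸ hu, hhe⟩

lemma cut_embed {V : Type*} [Fintype V] [DecidableEq V]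
    {EG EW : Type*} [Fintype EG] [Fintype EW] [DecidableEq EG]
    (gt gh : EG → V) (wt wh : EW → V) (Emb : EW → List EG)
    (hemb : ∀ e, IsWalk gt gh (wt e) (wh e) (Emb e)) (c : ℝ)
    (hc : ∀ e : EG, ((univ.filter (fun e' => e ∈ Emb e')).card : ℝ) ≤ c)
    (S : Finset V) : (cutF wt wh S : ℝ) ≤ (cutF gt gh S : ℝ) * c := by
  classical
  have hsub : (univ.filter (fun e' : EW => wt e' ∈ S ∧ wh e' ∉ S)) ⊆
      (univ.filter (fun e : EG => gt e ∈ S ∧ gh e ∉ S)).biUnion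
        (fun e => univ.filter (fun e' => e ∈ Emb e')) := by
    intro e' he'
    simp only [mem_filter, mem_univ, true_and] at he'
    obtain ⟨e, he, hcross⟩ := walk_cross gt gh S (Emb e') _ _ (hemb e') he'.1 he'.2
    simp only [mem_biUnion, mem_filter, mem_univ, true_and]
    exact ⟨e, hcross, he⟩
  have h1 : cutF wt wh S ≤
      ∑ e ∈ univ.filter (fun e : EG => gt e ∈ S ∧ gh e ∉ S),
        (univ.filter (fun e' : EW => e ∈ Emb e')).card :=
    le_trans (Finset.card_le_card hsub) (Finset.card_biUnion_le)
  calc (cutF wt wh S : ℝ)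
      ≤ ∑ e ∈ univ.filter (fun e : EG => gt e ∈ S ∧ gh e ∉ S),
          ((univ.filter (fun e' : EW => e ∈ Emb e')).card : ℝ) := by
        exact_mod_cast h1
    _ ≤ ∑ _e ∈ univ.filter (fun e : EG => gt e ∈ S ∧ gh e ∉ S), c :=
        Finset.sum_le_sum (fun e _ => hc e)
    _ = (cutF gt gh S : ℝ) * c := by
        rw [Finset.sum_const, cutF, nsmul_eq_mul]

lemma volF_le {V : Type*} [Fintype V] [DecidableEq V]
    {E F : Type*} [Fintype E] [Fintype F]
    (t h : E → V) (t' h' : F → V) (S : Finset V)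
    (hd : ∀ v, degF t h v ≤ degF t' h' v) : volF t h S ≤ volF t' h' S :=
  Finset.sum_le_sum (fun v _ => hd v)

theorem stmt3 {EG EW : Type*} [Fintype EG] [Fintype EW] [DecidableEq EG]
    (gt gh : EG → V) (wt wh : EW → V) (γ : V → ℕ)
    (φ ψ : ℝ) (hφ0 : 0 < φ) (hφ1 : φ < 1) (hψ0 : 0 < ψ) (hψ1 : ψ < 1)
    (R : ℝ) (hR : 0 ≤ R)
    (Emb EmbRev : EW → List EG)
    (hemb : ∀ e, IsWalk gt gh (wt e) (wh e) (Emb e))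
    (hembRev : ∀ e, IsWalk gh gt (wh e) (wt e) (EmbRev e))
    (hcong : ∀ e : EG, ((univ.filter (fun e' => e ∈ Emb e')).card : ℝ) ≤ 1 / (ψ * φ))
    (hcongRev : ∀ e : EG, ((univ.filter (fun e' => e ∈ EmbRev e')).card : ℝ) ≤ 1 / (ψ * φ))
    (hdeg : ∀ v, degF gt gh v ≤ degF wt wh v ∧ ((degF wt wh v : ℝ)) ≤ (degF gt gh v : ℝ) / ψ)
    (hcut : ∀ S : Finset V, (∑ v ∈ S, γ v) ≤ (∑ v ∈ Sᶜ, γ v) →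
      ψ * (volF wt wh S : ℝ) ≤ (cutF wt wh S : ℝ))
    (hcutRev : ∀ S : Finset V, (∑ v ∈ S, γ v) ≤ (∑ v ∈ Sᶜ, γ v) →
      ψ * (volF wt wh S : ℝ) ≤ (cutF wh wt S : ℝ)) :
    ∀ S : Finset V, volF gt gh S ≤ volF gt gh Sᶜ →
      ψ ^ 2 * φ * (volF gt gh S : ℝ) ≤ (cutF gt gh S : ℝ) ∧
      ψ ^ 2 * φ * (volF gt gh S : ℝ) ≤ (cutF gh gt S : ℝ) := by
  
  intro S hvol
  have hψφ : 0 < ψ * φ := mul_pos hψ0 hφ0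
  -- W-volume lower bounds
  have hvolW : (volF gt gh S : ℝ) ≤ (volF wt wh S : ℝ) := by
    exact_mod_cast volF_le gt gh wt wh S (fun v => (hdeg v).1)
  have hvolWc : (volF gt gh S : ℝ) ≤ (volF wt wh Sᶜ : ℝ) := by
    have h1 : volF gt gh S ≤ volF wt wh Sᶜ :=
      le_trans hvol (volF_le gt gh wt wh Sᶜ (fun v => (hdeg v).1))
    exact_mod_cast h1
  -- cut equalities under complement
  have hcc : ∀ (E : Type _) [Fintype E] (t h : E → V), cutF t h Sᶜ = cutF h t S := by
    intro E _ t h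
    unfold cutF
    congr 1
    apply Finset.filter_congr
    intro e _
    simp [Finset.mem_compl]
    tauto
  -- key: ψ · vol_G(S) ≤ cut_W in both directions
  have hkey : ψ * (volF gt gh S : ℝ) ≤ (cutF wt wh S : ℝ) ∧
      ψ * (volF gt gh S : ℝ) ≤ (cutF wh wt S : ℝ) := by
    rcases le_or_gt (∑ v ∈ S, γ v) (∑ v ∈ Sᶜ, γ v) with hγ | hγ
    · constructor
      · exact le_trans (by nlinarith) (hcut S hγ)
      · exact le_trans (by nlinarith) (hcutRev S hγ)
    · have hγ' : (∑ v ∈ Sᶜ, γ v) ≤ (∑ v ∈ Sᶜᶜ, γ v) := by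
        rw [compl_compl]; exact hγ.le
      constructor
      · have := hcutRev Sᶜ hγ'
        rw [hcc EW wh wt] at this
        exact le_trans (by nlinarith) this
      · have := hcut Sᶜ hγ'
        rw [hcc EW wt wh] at this
        exact le_trans (by nlinarith) this
  -- congestion bounds
  have hc1 : (cutF wt wh S : ℝ) ≤ (cutF gt gh S : ℝ) * (1 / (ψ * φ)) :=
    cut_embed gt gh wt wh Emb hemb _ hcong S
  have hc2 : (cutF wh wt S : ℝ) ≤ (cutF gh gt S : ℝ) * (1 / (ψ * φ)) :=
    cut_embed gh gt wh wt EmbRev hembRev _ hcongRev S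
  constructor
  · have h1 : ψ * φ * (cutF wt wh S : ℝ) ≤ (cutF gt gh S : ℝ) := by
      rw [mul_comm (ψ * φ)]
      rw [mul_one_div, le_div_iff₀ hψφ] at hc1
      linarith [hc1]
    nlinarith [hkey.1, h1]
  · have h1 : ψ * φ * (cutF wh wt S : ℝ) ≤ (cutF gh gt S : ℝ) := by
      rw [mul_comm (ψ * φ)]
      rw [mul_one_div, le_div_iff₀ hψφ] at hc2
      linarith [hc2]
    nlinarith [hkey.2, h1]
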